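/- Let B be a topological abelian group in which every neighbourhood of 0 contains an open subgroup, and let A ⊆ B be a subgroup that is discrete in the subspace topology. Then every group homomorphism f : A → ℚ/ℤ extends to a continuous group homomorphism g : B → ℚ/ℤ, i.e., there exists a continuous homomorphism g : B → ℚ/ℤ with g(a) = f(a) for all a ∈ A. -/

import Mathlib

/-- The group `ℚ/ℤ` (the quotient of `ℚ` by `ℤ`), equipped with the discrete topology. -/
def QZ : Type := ℚ ⧸ AddSubgroup.zmultiples (1 : ℚ)

noncomputable instance : AddCommGroup QZ :=
  inferInstanceAs (AddCommGroup (ℚ ⧸ AddSubgroup.zmultiples (1 : ℚ)))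

instance : TopologicalSpace QZ := ⊥

instance : DiscreteTopology QZ := ⟨rfl⟩

instance : IsTopologicalAddGroup QZ where
  continuous_add := continuous_of_discreteTopology
  continuous_neg := continuous_of_discreteTopology


noncomputable instance : DivisibleBy QZ ℤ :=
  inferInstanceAs (DivisibleBy (ℚ ⧸ AddSubgroup.zmultiples (1 : ℚ)) ℤ)

/-- In a topological abelian group in which every neighbourhood of `0` contains an
open subgroup, every homomorphism from a discrete subgroup `A` to `ℚ/ℤ` extends to a
continuous homomorphism on all of `B`. -/
theorem extend_hom_of_discrete_subgroup
    {B : Type*} [AddCommGroup B] [TopologicalSpace B] [IsTopologicalAddGroup B]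
    (hB : ∀ V ∈ nhds (0 : B), ∃ U : AddSubgroup B, IsOpen (U : Set B) ∧ (U : Set B) ⊆ V)
    (A : AddSubgroup B) (hA : DiscreteTopology A)
    (f : A →+ QZ) :
    ∃ g : B →+ QZ, Continuous g ∧ ∀ a : A, g a = f a := by
  -- Since `A` is discrete, `{0}` is open in `A`, so there is `V ∈ 𝓝 0` with `V ∩ A ⊆ {0}`.
  have h0 : IsOpen ({0} : Set A) := isOpen_discrete _
  rw [isOpen_induced_iff] at h0
  obtain ⟨t, ht, hteq⟩ := h0
  have ht0 : (0 : B) ∈ t := by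
    have : (⟨0, A.zero_mem⟩ : A) ∈ (Subtype.val ⁻¹' t : Set A) := by
      rw [hteq]; rfl
    exact this
  obtain ⟨U, hUopen, hUsub⟩ := hB t (ht.mem_nhds ht0)
  -- `A ⊓ U = ⊥`
  have hAU : ∀ x : B, x ∈ A → x ∈ U → x = 0 := by
    intro x hxA hxU
    have : (⟨x, hxA⟩ : A) ∈ (Subtype.val ⁻¹' t : Set A) := hUsub hxU
    rw [hteq] at this
    exact congrArg Subtype.val this
  -- map `A` into `B ⧸ U` injectively
  let π : B →+ B ⧸ U := QuotientAddGroup.mk' U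
  let i : A →+ B ⧸ U := π.comp A.subtype
  have hi : Function.Injective i := by
    intro a b hab
    have : ((a : B) - b) ∈ U := by
      rw [← QuotientAddGroup.eq_iff_sub_mem]
      exact hab
    have : ((a : B) - b) = 0 := hAU _ (A.sub_mem a.2 b.2) this
    exact Subtype.ext (sub_eq_zero.mp this)
  -- extend `f` along `i` using divisibility of `QZ`
  obtain ⟨g', hg'⟩ := (Module.Baer.of_divisible QZ).extension_property_addMonoidHom i hi f
  refine ⟨g'.comp π, ?_, fun a => ?_⟩
  · -- continuity: `g` vanishes on the open subgroup `U`
    have hker : ∀ x ∈ U, (g'.comp π) x = 0 := by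
      intro x hx
      have : π x = 0 := (QuotientAddGroup.eq_zero_iff x).mpr hx
      simp [AddMonoidHom.comp_apply, this]
    apply continuous_of_continuousAt_zero (g'.comp π)
    unfold ContinuousAt
    rw [map_zero, (by rw [nhds_discrete] : nhds (0 : QZ) = pure 0)]
    refine Filter.Tendsto.mono_right ?_ (le_refl _)
    rw [Filter.tendsto_pure]
    exact Filter.mem_of_superset (hUopen.mem_nhds U.zero_mem) hker
  · exact DFunLike.congr_fun hg' a
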